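/- Let D̄ be the closed unit disk in ℝ² (equivalently ℂ), and let 0 ≤ θ₁ < θ₂ < θ₃ < θ₄ < 2π be four angles, so the boundary points e^{iθ₁}, e^{iθ₂}, e^{iθ₃}, e^{iθ₄} lie on the unit circle in cyclic order. Let γ, δ : [0,1] → D̄ be continuous paths with γ(0) = e^{iθ₁}, γ(1) = e^{iθ₃}, δ(0) = e^{iθ₂}, δ(1) = e^{iθ₄}. Then the paths intersect: there exist s, t ∈ [0,1] with γ(s) = δ(t). -/

import Mathlib

open Complex Set

private lemma abs_min_sub_min (t a b : ℝ) : |min t a - min t b| ≤ |a - b| := by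
  rcases le_total t a with ha | ha <;> rcases le_total t b with hb | hb <;>
    rw [abs_le] <;>
    constructor <;>
    simp only [min_eq_left ha, min_eq_right ha, min_eq_left hb, min_eq_right hb] <;>
    cases abs_cases (a - b) <;> linarith [le_abs_self (a-b), neg_abs_le (a-b)]

private lemma tele_exp (F : ℕ → ℂ) (hF : ∀ k, F k ≠ 0) (n : ℕ) :
    Complex.exp (∑ k ∈ Finset.range n, Complex.log (F (k+1) / F k)) = F n / F 0 := by
  induction n with
  | zero => simp [div_self (hF 0)]
  | succ n ih =>
    rw [Finset.sum_range_succ, Complex.exp_add, ih,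
      Complex.exp_log (div_ne_zero (hF _) (hF _))]
    rw [div_mul_div_comm, mul_comm (F n) (F (n+1)), mul_div_mul_right _ _ (hF n)]

private lemma ball_slit {z : ℂ} (hz : z ∈ Metric.ball (1:ℂ) 1) : z ∈ Complex.slitPlane := by
  rw [Metric.mem_ball, dist_eq_norm] at hz
  rw [Complex.mem_slitPlane_iff]
  left
  have h2 : ‖z - 1‖ < 1 := by exact hz
  have h3 : (z-1).re ^2 + (z-1).im^2 < 1 := by
    have e1 := Complex.sq_norm (z-1)
    have e2 := Complex.normSq_apply (z-1)
    nlinarith [norm_nonneg (z-1)]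
  have h4 : (z-1).re = z.re - 1 := by simp
  nlinarith [sq_nonneg (z-1).im]

private lemma int_pin {m : ℤ} {X : ℝ} (h1 : -Real.pi < X + 2*Real.pi*m)
    (h2 : X + 2*Real.pi*m < Real.pi) (hX1 : -Real.pi < X) (hX2 : X < Real.pi) : m = 0 := by
  have hπ := Real.pi_pos
  have h3 : (-1:ℝ) < m := by nlinarith
  have h4 : (m:ℝ) < 1 := by nlinarith
  have h3' : -1 < m := by exact_mod_cast h3
  have h4' : m < 1 := by exact_mod_cast h4
  omega

private lemma re_div_lt (w : ℂ) (hw : ‖w‖ ≤ 1) (θ : ℝ) (hne : w ≠ Complex.exp (θ*Complex.I)) :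
    ((w - Complex.exp (θ*Complex.I)) / Complex.exp (θ*Complex.I)).re < 0 := by
  have he : Complex.exp ((θ:ℂ)*Complex.I) ≠ 0 := Complex.exp_ne_zero _
  have h0 : w / Complex.exp ((θ:ℂ)*Complex.I) - 1
      = (w - Complex.exp ((θ:ℂ)*Complex.I)) / Complex.exp ((θ:ℂ)*Complex.I) :=
    div_sub_one he
  rw [← h0]
  set z := w / Complex.exp ((θ:ℂ)*Complex.I) with hz
  have hz1 : ‖z‖ ≤ 1 := by
    rw [hz, norm_div, Complex.norm_exp_ofReal_mul_I]
    simpa using hw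
  have hz2 : z ≠ 1 := by
    intro h
    rw [hz, div_eq_one_iff_eq he] at h
    exact hne h
  have hsq : z.re^2 + z.im^2 ≤ 1 := by
    have e1 := Complex.sq_norm z
    have e2 := Complex.normSq_apply z
    have e3 : ‖z‖ ≤ 1 := hz1
    nlinarith [norm_nonneg z]
  simp only [Complex.sub_re, Complex.one_re]
  by_contra hcon
  push_neg at hcon
  have h5 : z.im = 0 := by nlinarith
  have h6 : z.re = 1 := by nlinarith
  exact hz2 (by apply Complex.ext <;> simp [h5, h6])

private lemma re_div_gt (w : ℂ) (hw : ‖w‖ ≤ 1) (θ : ℝ) (hne : w ≠ Complex.exp (θ*Complex.I)) :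
    0 < ((Complex.exp (θ*Complex.I) - w) / Complex.exp (θ*Complex.I)).re := by
  have h := re_div_lt w hw θ hne
  have e : (Complex.exp ((θ:ℂ)*Complex.I) - w) / Complex.exp ((θ:ℂ)*Complex.I)
      = -((w - Complex.exp ((θ:ℂ)*Complex.I)) / Complex.exp ((θ:ℂ)*Complex.I)) := by
    rw [← neg_div, neg_sub]
  rw [e, Complex.neg_re]
  linarith

open Complex Set

private lemma cos_neg_loc {x : ℝ} (hx : Real.cos x < 0) :
    ∃ k : ℤ, Real.pi/2 + k*(2*Real.pi) < x ∧ x < 3*Real.pi/2 + k*(2*Real.pi) := by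
  have hπ := Real.pi_pos
  set k := ⌊x / (2*Real.pi)⌋ with hk
  set y := x - k*(2*Real.pi) with hy
  have hy0 : 0 ≤ y := Int.sub_floor_div_mul_nonneg x (by linarith)
  have hy2 : y < 2*Real.pi := Int.sub_floor_div_mul_lt x (by linarith)
  have hcy : Real.cos y = Real.cos x := Real.cos_sub_int_mul_two_pi x k
  have h1 : Real.pi/2 < y := by
    by_contra hc
    push_neg at hc
    have : 0 ≤ Real.cos y := Real.cos_nonneg_of_mem_Icc ⟨by linarith, hc⟩
    linarith
  have h2 : y < 3*Real.pi/2 := by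
    by_contra hc
    push_neg at hc
    have : Real.cos (y - 2*Real.pi) = Real.cos y := Real.cos_sub_two_pi y
    have : 0 ≤ Real.cos (y - 2*Real.pi) :=
      Real.cos_nonneg_of_mem_Icc ⟨by linarith, by linarith⟩
    linarith [Real.cos_sub_two_pi y]
  exact ⟨k, by linarith, by linarith⟩

private lemma edge_var (φ : ℝ → ℝ) (hφ : ContinuousOn φ (Set.Icc 0 1))
    (h : ∀ t ∈ Set.Icc (0:ℝ) 1, Real.cos (φ t) < 0) : |φ 1 - φ 0| < Real.pi := by
  have hπ := Real.pi_pos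
  have h0m : (0:ℝ) ∈ Set.Icc (0:ℝ) 1 := by constructor <;> norm_num
  have h1m : (1:ℝ) ∈ Set.Icc (0:ℝ) 1 := by constructor <;> norm_num
  obtain ⟨k, hk1, hk2⟩ := cos_neg_loc (h 0 h0m)
  have claim : ∀ t ∈ Set.Icc (0:ℝ) 1,
      Real.pi/2 + k*(2*Real.pi) < φ t ∧ φ t < 3*Real.pi/2 + k*(2*Real.pi) := by
    intro t ht
    have hsub : Set.uIcc (0:ℝ) t ⊆ Set.Icc 0 1 := Set.uIcc_subset_Icc h0m ht
    have hivt := intermediate_value_uIcc (hφ.mono hsub)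
    constructor
    · by_contra hc
      push_neg at hc
      have hA : Real.pi/2 + k*(2*Real.pi) ∈ Set.uIcc (φ 0) (φ t) :=
        Set.mem_uIcc.2 (Or.inr ⟨hc, le_of_lt hk1⟩)
      obtain ⟨u, hu, hu2⟩ := hivt hA
      have : Real.cos (φ u) = 0 := by
        rw [hu2]
        rw [show Real.pi/2 + (k:ℝ)*(2*Real.pi) = Real.pi/2 + k*(2*Real.pi) from rfl]
        rw [Real.cos_add_int_mul_two_pi, Real.cos_pi_div_two]
      linarith [h u (hsub hu)]
    · by_contra hc
      push_neg at hc
      have hB : 3*Real.pi/2 + k*(2*Real.pi) ∈ Set.uIcc (φ 0) (φ t) :=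
        Set.mem_uIcc.2 (Or.inl ⟨le_of_lt hk2, hc⟩)
      obtain ⟨u, hu, hu2⟩ := hivt hB
      have hval : Real.cos (φ u) = 0 := by
        rw [hu2, show (3:ℝ)*Real.pi/2 + (k:ℝ)*(2*Real.pi)
          = (Real.pi/2 + Real.pi) + (k:ℝ)*(2*Real.pi) by ring,
          Real.cos_add_int_mul_two_pi, Real.cos_add_pi, Real.cos_pi_div_two, neg_zero]
      linarith [h u (hsub hu)]
  obtain ⟨ha1, ha2⟩ := claim 1 h1m
  obtain ⟨hb1, hb2⟩ := claim 0 h0m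
  rw [abs_lt]
  constructor <;> linarith

private lemma exp_sub_exp (α β : ℝ) :
    Complex.exp (α*Complex.I) - Complex.exp (β*Complex.I)
      = ((2*Real.sin ((β-α)/2) : ℝ) : ℂ)
        * Complex.exp ((((α+β)/2 - Real.pi/2 : ℝ) : ℂ)*Complex.I) := by
  apply Complex.ext
  · simp only [Complex.sub_re, Complex.exp_ofReal_mul_I_re, Complex.mul_re,
      Complex.ofReal_re, Complex.ofReal_im, Complex.exp_ofReal_mul_I_im, zero_mul, sub_zero]
    rw [Real.cos_sub_cos, Real.cos_sub, Real.cos_pi_div_two, Real.sin_pi_div_two]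
    rw [show (α - β)/2 = -((β-α)/2) by ring, Real.sin_neg]
    ring
  · simp only [Complex.sub_im, Complex.exp_ofReal_mul_I_im, Complex.mul_im,
      Complex.ofReal_re, Complex.ofReal_im, Complex.exp_ofReal_mul_I_re, zero_mul, add_zero]
    rw [Real.sin_sub_sin, Real.sin_sub, Real.cos_pi_div_two, Real.sin_pi_div_two]
    rw [show (α - β)/2 = -((β-α)/2) by ring, Real.sin_neg]
    ring

private lemma im_congr (z : ℂ) (α β : ℝ) (hαβ : α < β) (hlt : β - α < 2*Real.pi)
    (h : Complex.exp z = Complex.exp (α*Complex.I) - Complex.exp (β*Complex.I)) :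
    ∃ n : ℤ, z.im = (α+β)/2 - Real.pi/2 + n*(2*Real.pi) := by
  have hπ := Real.pi_pos
  set ρ : ℝ := 2*Real.sin ((β-α)/2) with hρdef
  have hρ : 0 < ρ := by
    have := Real.sin_pos_of_pos_of_lt_pi (x := (β-α)/2) (by linarith) (by linarith)
    linarith
  set ψ : ℝ := (α+β)/2 - Real.pi/2 with hψdef
  have key : Complex.exp z = Complex.exp ((Real.log ρ : ℂ) + (ψ:ℂ)*Complex.I) := by
    rw [h, exp_sub_exp, Complex.exp_add, ← Complex.ofReal_exp, Real.exp_log hρ]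
  obtain ⟨n, hn⟩ := Complex.exp_eq_exp_iff_exists_int.mp key
  refine ⟨n, ?_⟩
  have := congrArg Complex.im hn
  simpa using this


private lemma abs_min_sub_min' (t a b : ℝ) : |min t a - min t b| ≤ |a - b| := by
  rcases le_total t a with ha | ha <;> rcases le_total t b with hb | hb <;>
    rw [abs_le] <;>
    constructor <;>
    simp only [min_eq_left ha, min_eq_right ha, min_eq_left hb, min_eq_right hb] <;>
    cases abs_cases (a - b) <;> linarith [le_abs_self (a-b), neg_abs_le (a-b)]

private lemma tele_exp' (F : ℕ → ℂ) (hF : ∀ k, F k ≠ 0) (n : ℕ) :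
    Complex.exp (∑ k ∈ Finset.range n, Complex.log (F (k+1) / F k)) = F n / F 0 := by
  induction n with
  | zero => simp [div_self (hF 0)]
  | succ n ih =>
    rw [Finset.sum_range_succ, Complex.exp_add, ih,
      Complex.exp_log (div_ne_zero (hF _) (hF _))]
    rw [div_mul_div_comm, mul_comm (F n) (F (n+1)), mul_div_mul_right _ _ (hF n)]

private lemma ball_slit' {z : ℂ} (hz : z ∈ Metric.ball (1:ℂ) 1) : z ∈ Complex.slitPlane := by
  rw [Metric.mem_ball, dist_eq_norm] at hz
  rw [Complex.mem_slitPlane_iff]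
  left
  have h2 : ‖z - 1‖ < 1 := by exact hz
  have h3 : (z-1).re ^2 + (z-1).im^2 < 1 := by
    have e1 := Complex.sq_norm (z-1)
    have e2 := Complex.normSq_apply (z-1)
    nlinarith [norm_nonneg (z-1)]
  have h4 : (z-1).re = z.re - 1 := by simp
  nlinarith [sq_nonneg (z-1).im]

private lemma lift_step {X : Type*} [TopologicalSpace X]
    (F : X → ℝ → ℂ) (hF : Continuous fun p : X × ℝ => F p.1 p.2)
    (hne : ∀ x t, F x t ≠ 0)
    (hclamp : ∀ x t, F x (max 0 (min t 1)) = F x t)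
    (N : ℕ) (hN : 0 < N)
    (hrat : ∀ x a b, |a - b| ≤ 1 / (N:ℝ) → F x a / F x b ∈ Metric.ball (1:ℂ) 1)
    (G₀ : X → ℂ) (hG₀ : Continuous G₀) (hexp0 : ∀ x, Complex.exp (G₀ x) = F x 0) :
    ∃ G : X → ℝ → ℂ, (Continuous fun p : X × ℝ => G p.1 p.2) ∧
      ∀ x t, Complex.exp (G x t) = F x t := by
  have hNR : (0:ℝ) < N := by exact_mod_cast hN
  refine ⟨fun x t => G₀ x + ∑ k ∈ Finset.range N,
      Complex.log (F x (min t (((k:ℕ)+1 : ℕ)/N)) / F x (min t ((k:ℕ)/N))), ?_, ?_⟩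
  · apply Continuous.add (hG₀.comp continuous_fst)
    apply continuous_finset_sum
    intro k _
    have hd : |(((k+1 : ℕ):ℝ)/N) - ((k:ℕ):ℝ)/N| ≤ 1/N := by
      rw [div_sub_div_same]
      push_cast
      rw [show ((k:ℝ) + 1 - k) = 1 by ring]
      rw [abs_div, abs_one, abs_of_pos hNR]
    have hc : Continuous fun p : X × ℝ =>
        F p.1 (min p.2 (((k+1 : ℕ):ℝ)/N)) / F p.1 (min p.2 (((k:ℕ):ℝ)/N)) := by
      apply Continuous.div
      · exact hF.comp (continuous_fst.prodMk (continuous_snd.min continuous_const))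
      · exact hF.comp (continuous_fst.prodMk (continuous_snd.min continuous_const))
      · intro p
        exact hne _ _
    apply hc.clog
    intro p
    apply ball_slit'
    apply hrat
    exact le_trans (abs_min_sub_min' _ _ _) hd
  · intro x t
    rw [Complex.exp_add]
    have hP : ∀ k : ℕ, F x (min t ((k:ℕ)/N)) ≠ 0 := fun k => hne _ _
    have := tele_exp' (fun k : ℕ => F x (min t ((k:ℕ)/N))) hP N
    rw [show (∑ k ∈ Finset.range N,
        Complex.log (F x (min t (((k:ℕ)+1 : ℕ)/N)) / F x (min t ((k:ℕ)/N))))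
      = ∑ k ∈ Finset.range N,
        Complex.log ((fun k : ℕ => F x (min t ((k:ℕ)/N))) (k+1)
          / (fun k : ℕ => F x (min t ((k:ℕ)/N))) k) from rfl]
    rw [this, hexp0]
    have hNN : ((N:ℝ))/N = 1 := div_self (ne_of_gt hNR)
    simp only [Nat.cast_zero, zero_div, hNN]
    -- goal : F x 0 * (F x (min t 1) / F x (min t 0)) = F x t
    rcases le_total t 0 with ht0 | ht0
    · have e1 : min t 1 = t := min_eq_left (by linarith)
      have e2 : min t 0 = t := min_eq_left ht0
      rw [e1, e2, div_self (hne x t), mul_one]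
      have hcl := hclamp x t
      rw [show max 0 (min t 1) = 0 by rw [e1]; exact max_eq_left ht0] at hcl
      exact hcl
    · have e2 : min t 0 = 0 := min_eq_right ht0
      rw [e2, mul_comm, div_mul_cancel₀ _ (hne x 0)]
      rcases le_total t 1 with ht1 | ht1
      · rw [min_eq_left ht1]
      · rw [min_eq_right ht1]
        have hcl := hclamp x t
        rwa [min_eq_right ht1, max_eq_right zero_le_one] at hcl

private lemma abs_max_sub_max (t a b : ℝ) : |max t a - max t b| ≤ |a - b| := by
  rcases le_total t a with ha | ha <;> rcases le_total t b with hb | hb <;>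
    rw [abs_le] <;>
    constructor <;>
    simp only [max_eq_left ha, max_eq_right ha, max_eq_left hb, max_eq_right hb] <;>
    cases abs_cases (a - b) <;> linarith [le_abs_self (a-b), neg_abs_le (a-b)]


set_option maxHeartbeats 2000000

/-- **Crossing paths in the disk with cyclically ordered endpoints.**
Let `D̄` be the closed unit disk in `ℂ`, and let `0 ≤ θ₁ < θ₂ < θ₃ < θ₄ < 2π` be four
angles, so the boundary points `e^{iθ₁}, e^{iθ₂}, e^{iθ₃}, e^{iθ₄}` lie on the unit
circle in cyclic order.  Let `γ, δ : [0,1] → D̄` be continuous paths with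
`γ 0 = e^{iθ₁}`, `γ 1 = e^{iθ₃}`, `δ 0 = e^{iθ₂}`, `δ 1 = e^{iθ₄}`.  Then the paths
intersect: there exist `s, t ∈ [0,1]` with `γ s = δ t`. -/
theorem paths_in_disk_cross (θ₁ θ₂ θ₃ θ₄ : ℝ)
    (h₀ : 0 ≤ θ₁) (h₁₂ : θ₁ < θ₂) (h₂₃ : θ₂ < θ₃) (h₃₄ : θ₃ < θ₄) (h₄ : θ₄ < 2 * Real.pi)
    (γ δ : ℝ → ℂ)
    (hγc : ContinuousOn γ (Set.Icc 0 1)) (hδc : ContinuousOn δ (Set.Icc 0 1))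
    (hγm : ∀ t ∈ Set.Icc (0:ℝ) 1, γ t ∈ Metric.closedBall (0 : ℂ) 1)
    (hδm : ∀ t ∈ Set.Icc (0:ℝ) 1, δ t ∈ Metric.closedBall (0 : ℂ) 1)
    (hγ0 : γ 0 = Complex.exp (θ₁ * Complex.I)) (hγ1 : γ 1 = Complex.exp (θ₃ * Complex.I))
    (hδ0 : δ 0 = Complex.exp (θ₂ * Complex.I)) (hδ1 : δ 1 = Complex.exp (θ₄ * Complex.I)) :
    ∃ s ∈ Set.Icc (0:ℝ) 1, ∃ t ∈ Set.Icc (0:ℝ) 1, γ s = δ t := by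
  have hπ := Real.pi_pos
  by_contra hcon
  push_neg at hcon
  -- the clamp function
  set c : ℝ → ℝ := fun x => max 0 (min x 1) with hcdef
  have hcmem : ∀ x, c x ∈ Set.Icc (0:ℝ) 1 :=
    fun x => ⟨le_max_left _ _, max_le (by norm_num) (min_le_right _ _)⟩
  have hcid : ∀ x ∈ Set.Icc (0:ℝ) 1, c x = x := by
    intro x hx
    show max 0 (min x 1) = x
    rw [min_eq_left hx.2, max_eq_right hx.1]
  have hc0 : c 0 = 0 := hcid 0 ⟨le_refl _, zero_le_one⟩
  have hc1 : c 1 = 1 := hcid 1 ⟨zero_le_one, le_refl _⟩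
  have hccont : Continuous c := continuous_const.max (continuous_id.min continuous_const)
  have hclip : ∀ a b : ℝ, |c a - c b| ≤ |a - b| := by
    intro a b
    calc |c a - c b| ≤ |min a 1 - min b 1| := abs_max_sub_max 0 _ _
    _ ≤ |a - b| := by
        rw [min_comm a 1, min_comm b 1]; exact abs_min_sub_min 1 a b
  -- the two clamped paths and their difference
  set u : ℝ → ℂ := fun s => γ (c s) with hudef
  set v : ℝ → ℂ := fun t => δ (c t) with hvdef
  set f : ℝ → ℝ → ℂ := fun s t => u s - v t with hfdef
  have hucont : Continuous u := hγc.comp_continuous hccont hcmem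
  have hvcont : Continuous v := hδc.comp_continuous hccont hcmem
  have hfc : Continuous fun p : ℝ × ℝ => f p.1 p.2 :=
    (hucont.comp continuous_fst).sub (hvcont.comp continuous_snd)
  have hne : ∀ s t, f s t ≠ 0 :=
    fun s t => sub_ne_zero.2 (hcon (c s) (hcmem s) (c t) (hcmem t))
  have hcc : ∀ x, c (c x) = c x := fun x => hcid (c x) (hcmem x)
  have hfclamp1 : ∀ s t, f (max 0 (min s 1)) t = f s t := by
    intro s t
    show u (c s) - v t = u s - v t
    rw [show u (c s) = u s from by show γ (c (c s)) = γ (c s); rw [hcc]]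
  have hfclamp2 : ∀ s t, f s (max 0 (min t 1)) = f s t := by
    intro s t
    show u s - v (c t) = u s - v t
    rw [show v (c t) = v t from by show δ (c (c t)) = δ (c t); rw [hcc]]
  -- the minimum of ‖f‖
  obtain ⟨p₀, hp₀, hmin⟩ := (isCompact_Icc.prod isCompact_Icc).exists_isMinOn
    (Set.nonempty_of_mem (Set.mk_mem_prod (Set.left_mem_Icc.2 zero_le_one)
      (Set.left_mem_Icc.2 zero_le_one)))
    (hfc.norm).continuousOn
  set ε := ‖f p₀.1 p₀.2‖ with hεdef
  have hε : 0 < ε := norm_pos_iff.2 (hne _ _)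
  have hεle : ∀ s t, ε ≤ ‖f s t‖ := by
    intro s t
    have h1 : f s t = f (c s) (c t) := by
      show u s - v t = u (c s) - v (c t)
      rw [show u (c s) = u s from by show γ (c (c s)) = γ (c s); rw [hcc],
        show v (c t) = v t from by show δ (c (c t)) = δ (c t); rw [hcc]]
    rw [h1, hεdef]
    exact isMinOn_iff.mp hmin (c s, c t) (Set.mk_mem_prod (hcmem s) (hcmem t))
  -- uniform continuity
  have hUC : ∀ (w : ℝ → ℂ), ContinuousOn w (Set.Icc 0 1) →
      ∃ η > 0, ∀ a b : ℝ, |a - b| < η → ‖w (c a) - w (c b)‖ < ε := by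
    intro w hw
    have h1 := isCompact_Icc.uniformContinuousOn_of_continuous hw
    rw [Metric.uniformContinuousOn_iff] at h1
    obtain ⟨η, hη, H⟩ := h1 ε hε
    refine ⟨η, hη, fun a b hab => ?_⟩
    have h2 : dist (c a) (c b) < η := by
      rw [Real.dist_eq]; exact lt_of_le_of_lt (hclip a b) hab
    have := H (c a) (hcmem a) (c b) (hcmem b) h2
    rwa [dist_eq_norm] at this
  obtain ⟨η₁, hη₁, hUu⟩ := hUC γ hγc
  obtain ⟨η₂, hη₂, hUv⟩ := hUC δ hδc
  obtain ⟨n0, hn0⟩ := exists_nat_one_div_lt (lt_min hη₁ hη₂)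
  set N : ℕ := n0 + 1 with hNdef
  have hN : 0 < N := Nat.succ_pos _
  have hNr : (1:ℝ)/(N:ℝ) < min η₁ η₂ := by
    have : ((N:ℝ)) = (n0:ℝ) + 1 := by push_cast [hNdef]; ring
    rw [this]; exact hn0
  -- ratio bounds
  have hball : ∀ (x y : ℂ), x ≠ 0 → y ≠ 0 → ‖x - y‖ < ε → ε ≤ ‖y‖ →
      x / y ∈ Metric.ball (1:ℂ) 1 := by
    intro x y hx hy h1 h2
    rw [Metric.mem_ball, dist_eq_norm, div_sub_one hy, norm_div]
    rw [div_lt_one (lt_of_lt_of_le hε h2)]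
    exact lt_of_lt_of_le h1 h2
  have hratu : ∀ (t a b : ℝ), |a - b| ≤ 1/(N:ℝ) →
      f a t / f b t ∈ Metric.ball (1:ℂ) 1 := by
    intro t a b hab
    apply hball _ _ (hne a t) (hne b t) _ (hεle b t)
    have h1 : f a t - f b t = γ (c a) - γ (c b) := by
      show (u a - v t) - (u b - v t) = _
      show (γ (c a) - v t) - (γ (c b) - v t) = _
      ring
    rw [h1]
    exact hUu a b (lt_of_le_of_lt hab (lt_of_lt_of_le hNr (min_le_left _ _)))
  have hratv : ∀ (s a b : ℝ), |a - b| ≤ 1/(N:ℝ) →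
      f s a / f s b ∈ Metric.ball (1:ℂ) 1 := by
    intro s a b hab
    apply hball _ _ (hne s a) (hne s b) _ (hεle s b)
    have h1 : f s a - f s b = -(δ (c a) - δ (c b)) := by
      show (u s - v a) - (u s - v b) = _
      show (u s - δ (c a)) - (u s - δ (c b)) = _
      ring
    rw [h1, norm_neg]
    exact hUv a b (lt_of_le_of_lt hab (lt_of_lt_of_le hNr (min_le_right _ _)))
  -- first lift : along the bottom edge
  obtain ⟨Gbot, hGLc, hGL⟩ := lift_step (X := PUnit.{1}) (fun _ s => f s 0)
    (hfc.comp (continuous_snd.prodMk continuous_const))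
    (fun _ t => hne t 0)
    (fun _ t => hfclamp1 t 0)
    N hN
    (fun _ a b hab => hratu 0 a b hab)
    (fun _ => Complex.log (f 0 0)) continuous_const
    (fun _ => Complex.exp_log (hne 0 0))
  set L : ℝ → ℂ := fun s => Gbot PUnit.unit s with hLdef
  have hLc : Continuous L := hGLc.comp (continuous_const.prodMk continuous_id)
  have hLexp : ∀ s, Complex.exp (L s) = f s 0 := fun s => hGL PUnit.unit s
  -- second lift : the full square
  obtain ⟨g, hgc, hg⟩ := lift_step (X := ℝ) f hfc hne hfclamp2 N hN hratv L hLc hLexp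
  -- corner values of f
  have hf00 : f 0 0 = Complex.exp (θ₁*Complex.I) - Complex.exp (θ₂*Complex.I) := by
    show γ (c 0) - δ (c 0) = _
    rw [hc0, hγ0, hδ0]
  have hf10 : f 1 0 = Complex.exp (θ₃*Complex.I) - Complex.exp (θ₂*Complex.I) := by
    show γ (c 1) - δ (c 0) = _
    rw [hc0, hc1, hγ1, hδ0]
  have hf11 : f 1 1 = Complex.exp (θ₃*Complex.I) - Complex.exp (θ₄*Complex.I) := by
    show γ (c 1) - δ (c 1) = _
    rw [hc1, hγ1, hδ1]
  have hf01 : f 0 1 = Complex.exp (θ₁*Complex.I) - Complex.exp (θ₄*Complex.I) := by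
    show γ (c 0) - δ (c 1) = _
    rw [hc0, hc1, hγ0, hδ1]
  -- corner congruences
  obtain ⟨n₁, hn₁⟩ := im_congr (g 0 0) θ₁ θ₂ h₁₂ (by linarith)
    (by rw [hg 0 0, hf00])
  obtain ⟨n₂, hn₂'⟩ := im_congr (g 1 0 + (Real.pi:ℂ)*Complex.I) θ₂ θ₃ h₂₃ (by linarith)
    (by rw [Complex.exp_add, hg 1 0, hf10, Complex.exp_pi_mul_I]; ring)
  have hn₂ : (g 1 0).im + Real.pi = (θ₂+θ₃)/2 - Real.pi/2 + n₂*(2*Real.pi) := by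
    have h1 : (g 1 0 + (Real.pi:ℂ)*Complex.I).im = (g 1 0).im + Real.pi := by simp
    rw [← h1]; exact hn₂'
  obtain ⟨n₃, hn₃⟩ := im_congr (g 1 1) θ₃ θ₄ h₃₄ (by linarith)
    (by rw [hg 1 1, hf11])
  obtain ⟨n₄, hn₄⟩ := im_congr (g 0 1) θ₁ θ₄ (by linarith) (by linarith)
    (by rw [hg 0 1, hf01])
  -- edge inequalities : the four sides of the square
  have hnorm_u : ∀ s, ‖u s‖ ≤ 1 := by
    intro s
    have := hγm (c s) (hcmem s)
    rwa [mem_closedBall_zero_iff] at this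
  have hnorm_v : ∀ t, ‖v t‖ ≤ 1 := by
    intro t
    have := hδm (c t) (hcmem t)
    rwa [mem_closedBall_zero_iff] at this
  have hv0 : v 0 = Complex.exp (θ₂*Complex.I) := by show δ (c 0) = _; rw [hc0, hδ0]
  have hv1 : v 1 = Complex.exp (θ₄*Complex.I) := by show δ (c 1) = _; rw [hc1, hδ1]
  have hu0 : u 0 = Complex.exp (θ₁*Complex.I) := by show γ (c 0) = _; rw [hc0, hγ0]
  have hu1 : u 1 = Complex.exp (θ₃*Complex.I) := by show γ (c 1) = _; rw [hc1, hγ1]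
  -- generic computation of the real part of exp (g s t - θ I)
  have hre_eq : ∀ (z : ℂ) (θ : ℝ), (Complex.exp (z - (θ:ℂ)*Complex.I)).re
      = Real.exp z.re * Real.cos (z.im - θ) := by
    intro z θ
    rw [Complex.exp_re]
    congr 1
    · congr 1; simp
    · congr 1; simp
  have hcos_bot : ∀ s ∈ Set.Icc (0:ℝ) 1, Real.cos ((g s 0).im - θ₂) < 0 := by
    intro s _
    have hwne : u s ≠ Complex.exp (θ₂*Complex.I) := by
      intro h
      apply hne s 0
      show u s - v 0 = 0
      rw [h, hv0, sub_self]
    have hre := re_div_lt (u s) (hnorm_u s) θ₂ hwne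
    have hE : Complex.exp (g s 0 - (θ₂:ℂ)*Complex.I)
        = (u s - Complex.exp ((θ₂:ℂ)*Complex.I)) / Complex.exp ((θ₂:ℂ)*Complex.I) := by
      rw [Complex.exp_sub, hg s 0]
      show (u s - v 0) / _ = _
      rw [hv0]
    have h3 := hre_eq (g s 0) θ₂
    rw [hE] at h3
    nlinarith [Real.exp_pos ((g s 0).re)]
  have hcos_top : ∀ s ∈ Set.Icc (0:ℝ) 1, Real.cos ((g s 1).im - θ₄) < 0 := by
    intro s _
    have hwne : u s ≠ Complex.exp (θ₄*Complex.I) := by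
      intro h
      apply hne s 1
      show u s - v 1 = 0
      rw [h, hv1, sub_self]
    have hre := re_div_lt (u s) (hnorm_u s) θ₄ hwne
    have hE : Complex.exp (g s 1 - (θ₄:ℂ)*Complex.I)
        = (u s - Complex.exp ((θ₄:ℂ)*Complex.I)) / Complex.exp ((θ₄:ℂ)*Complex.I) := by
      rw [Complex.exp_sub, hg s 1]
      show (u s - v 1) / _ = _
      rw [hv1]
    have h3 := hre_eq (g s 1) θ₄
    rw [hE] at h3
    nlinarith [Real.exp_pos ((g s 1).re)]
  have hcos_left : ∀ t ∈ Set.Icc (0:ℝ) 1, 0 < Real.cos ((g 0 t).im - θ₁) := by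
    intro t _
    have hwne : v t ≠ Complex.exp (θ₁*Complex.I) := by
      intro h
      apply hne 0 t
      show u 0 - v t = 0
      rw [h, hu0, sub_self]
    have hre := re_div_gt (v t) (hnorm_v t) θ₁ hwne
    have hE : Complex.exp (g 0 t - (θ₁:ℂ)*Complex.I)
        = (Complex.exp ((θ₁:ℂ)*Complex.I) - v t) / Complex.exp ((θ₁:ℂ)*Complex.I) := by
      rw [Complex.exp_sub, hg 0 t]
      show (u 0 - v t) / _ = _
      rw [hu0]
    have h3 := hre_eq (g 0 t) θ₁
    rw [hE] at h3
    nlinarith [Real.exp_pos ((g 0 t).re)]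
  have hcos_right : ∀ t ∈ Set.Icc (0:ℝ) 1, 0 < Real.cos ((g 1 t).im - θ₃) := by
    intro t _
    have hwne : v t ≠ Complex.exp (θ₃*Complex.I) := by
      intro h
      apply hne 1 t
      show u 1 - v t = 0
      rw [h, hu1, sub_self]
    have hre := re_div_gt (v t) (hnorm_v t) θ₃ hwne
    have hE : Complex.exp (g 1 t - (θ₃:ℂ)*Complex.I)
        = (Complex.exp ((θ₃:ℂ)*Complex.I) - v t) / Complex.exp ((θ₃:ℂ)*Complex.I) := by
      rw [Complex.exp_sub, hg 1 t]
      show (u 1 - v t) / _ = _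
      rw [hu1]
    have h3 := hre_eq (g 1 t) θ₃
    rw [hE] at h3
    nlinarith [Real.exp_pos ((g 1 t).re)]
  -- apply the edge variation lemma to the four edges
  have hgim_cont : Continuous fun p : ℝ × ℝ => (g p.1 p.2).im :=
    Complex.continuous_im.comp hgc
  have Hb : |(g 1 0).im - (g 0 0).im| < Real.pi := by
    have h1 := edge_var (fun s => (g s 0).im - θ₂)
      (((hgim_cont.comp (continuous_id.prodMk continuous_const)).sub
        continuous_const).continuousOn)
      (fun s hs => hcos_bot s hs)
    have h2 : ((g 1 0).im - θ₂) - ((g 0 0).im - θ₂) = (g 1 0).im - (g 0 0).im := by ring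
    rwa [h2] at h1
  have Ht : |(g 1 1).im - (g 0 1).im| < Real.pi := by
    have h1 := edge_var (fun s => (g s 1).im - θ₄)
      (((hgim_cont.comp (continuous_id.prodMk continuous_const)).sub
        continuous_const).continuousOn)
      (fun s hs => hcos_top s hs)
    have h2 : ((g 1 1).im - θ₄) - ((g 0 1).im - θ₄) = (g 1 1).im - (g 0 1).im := by ring
    rwa [h2] at h1
  have Hl : |(g 0 1).im - (g 0 0).im| < Real.pi := by
    have h1 := edge_var (fun t => (g 0 t).im - θ₁ - Real.pi)
      ((((hgim_cont.comp (continuous_const.prodMk continuous_id)).sub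
        continuous_const).sub continuous_const).continuousOn)
      (fun t ht => by
        rw [Real.cos_sub_pi]
        linarith [hcos_left t ht])
    have h2 : ((g 0 1).im - θ₁ - Real.pi) - ((g 0 0).im - θ₁ - Real.pi)
        = (g 0 1).im - (g 0 0).im := by ring
    rwa [h2] at h1
  have Hr : |(g 1 1).im - (g 1 0).im| < Real.pi := by
    have h1 := edge_var (fun t => (g 1 t).im - θ₃ - Real.pi)
      ((((hgim_cont.comp (continuous_const.prodMk continuous_id)).sub
        continuous_const).sub continuous_const).continuousOn)
      (fun t ht => by
        rw [Real.cos_sub_pi]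
        linarith [hcos_right t ht])
    have h2 : ((g 1 1).im - θ₃ - Real.pi) - ((g 1 0).im - θ₃ - Real.pi)
        = (g 1 1).im - (g 1 0).im := by ring
    rwa [h2] at h1
  -- final integer arithmetic
  obtain ⟨Hb1, Hb2⟩ := abs_lt.mp Hb
  obtain ⟨Ht1, Ht2⟩ := abs_lt.mp Ht
  obtain ⟨Hl1, Hl2⟩ := abs_lt.mp Hl
  obtain ⟨Hr1, Hr2⟩ := abs_lt.mp Hr
  have e1 : (g 1 0).im - (g 0 0).im
      = ((θ₃-θ₁)/2 - Real.pi) + 2*Real.pi*((n₂ - n₁ : ℤ):ℝ) := by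
    push_cast
    linarith
  have m1 : (n₂ - n₁ : ℤ) = 0 :=
    int_pin (by rw [← e1]; exact Hb1) (by rw [← e1]; exact Hb2)
      (by linarith) (by linarith)
  have e2 : (g 1 1).im - (g 1 0).im
      = ((θ₄-θ₂)/2 - Real.pi) + 2*Real.pi*((n₃ - n₂ + 1 : ℤ):ℝ) := by
    push_cast
    linarith
  have m2 : (n₃ - n₂ + 1 : ℤ) = 0 :=
    int_pin (by rw [← e2]; exact Hr1) (by rw [← e2]; exact Hr2)
      (by linarith) (by linarith)
  have e3 : (g 1 1).im - (g 0 1).im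
      = ((θ₃-θ₁)/2) + 2*Real.pi*((n₃ - n₄ : ℤ):ℝ) := by
    push_cast
    linarith
  have m3 : (n₃ - n₄ : ℤ) = 0 :=
    int_pin (by rw [← e3]; exact Ht1) (by rw [← e3]; exact Ht2)
      (by linarith) (by linarith)
  have e4 : (g 0 1).im - (g 0 0).im
      = ((θ₄-θ₂)/2) + 2*Real.pi*((n₄ - n₁ : ℤ):ℝ) := by
    push_cast
    linarith
  have m4 : (n₄ - n₁ : ℤ) = 0 :=
    int_pin (by rw [← e4]; exact Hl1) (by rw [← e4]; exact Hl2)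
      (by linarith) (by linarith)
  omega
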